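/- Let γ ∈ (0,1) and let (λ_k)_{k∈ℕ} be a sequence of complex numbers with Re λ_k > 0 for all k ∈ ℕ. If ∑_{k=1}^∞ [1 − |(λ_k − 1)/(λ_k + 1)|] = +∞, then ∑_{k=1}^∞ [1 − |(λ_k^γ − 1)/(λ_k^γ + 1)|] = +∞, where λ_k^γ denotes the principal power. -/

import Mathlib

open MeasureTheory Filter Set

noncomputable section

/-- Partial Laplace integral of `f : [0,∞) → ℂ` at `l` up to time `t`. -/
def lapPartial (f : ℝ → ℂ) (l : ℂ) (t : ℝ) : ℂ :=
  ∫ s in Set.Ioc (0:ℝ) t, Complex.exp (-(l * s)) * f s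

/-- The Laplace transform of `f` at `l` exists and equals `F`. -/
def HasLaplace (f : ℝ → ℂ) (l : ℂ) (F : ℂ) : Prop :=
  Filter.Tendsto (lapPartial f l) Filter.atTop (nhds F)

/-- The abscissa of convergence of the Laplace transform of `f`, as an extended real. -/
def laplaceAbs (f : ℝ → ℂ) : EReal :=
  sInf {x : EReal | ∃ ω : ℝ, x = (ω : EReal) ∧ ∀ l : ℂ, ω < l.re → ∃ F, HasLaplace f l F}

/-- `lam` is a uniqueness sequence for the one-dimensional Laplace transform. -/
def IsUniquenessSeq (lam : ℕ → ℂ) : Prop :=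
  ∀ f : ℝ → ℂ, MeasureTheory.LocallyIntegrableOn f (Set.Ici 0) →
    (∀ k, laplaceAbs f < (((lam k).re : ℝ) : EReal)) →
    (∀ k, HasLaplace f (lam k) 0) →
    ∀ᵐ t : ℝ, 0 ≤ t → f t = 0

/-- Partial `n`-dimensional Laplace integral of `f : [0,∞)^n → ℂ` at `l` over the box `[0,t]`. -/
def mLapPartial (n : ℕ) (f : (Fin n → ℝ) → ℂ) (l : Fin n → ℂ) (t : Fin n → ℝ) : ℂ :=
  ∫ s in Set.pi Set.univ (fun i => Set.Ioc (0:ℝ) (t i)),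
    Complex.exp (-(∑ i, l i * (s i))) * f s

/-- The `n`-dimensional Laplace transform of `f` at `l` exists (as the iterated limit
`t₁ → ∞, …, tₙ → ∞` of the partial integrals) and equals `F`. -/
def HasMLaplace (n : ℕ) (f : (Fin n → ℝ) → ℂ) (l : Fin n → ℂ) (F : ℂ) : Prop :=
  Filter.Tendsto (mLapPartial n f l) Filter.atTop (nhds F)

/-- `Ω(f)`: the region of convergence of the `n`-dimensional Laplace integral. -/
def mOmega (n : ℕ) (f : (Fin n → ℝ) → ℂ) : Set (Fin n → ℂ) :=
  {l | ∃ F, HasMLaplace n f l F}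

/-- `Ω_b(f)`: the set of `l` for which the partial Laplace integrals are bounded. -/
def mOmegaB (n : ℕ) (f : (Fin n → ℝ) → ℂ) : Set (Fin n → ℂ) :=
  {l | Bornology.IsBounded (mLapPartial n f l '' {t | ∀ i, 0 ≤ t i})}

/-- A countable family `lam : K → ℂⁿ` is a uniqueness sequence for the `n`-dimensional
Laplace transform. -/
def IsMUniquenessFamily (n : ℕ) {K : Type} [Countable K] (lam : K → Fin n → ℂ) : Prop :=
  ∀ f : (Fin n → ℝ) → ℂ,
    MeasureTheory.LocallyIntegrableOn f {t | ∀ i, 0 ≤ t i} →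
    (∃ ω : Fin n → EReal, (∀ j, ω j ≠ ⊤) ∧
      {l : Fin n → ℂ | ∀ j, ω j < (((l j).re : ℝ) : EReal)} ⊆ mOmegaB n f ∩ mOmega n f ∧
      ∀ k j, ω j < ((((lam k j).re : ℝ)) : EReal)) →
    (∀ k, HasMLaplace n f (lam k) 0) →
    ∀ᵐ t : Fin n → ℝ, (∀ i, 0 ≤ t i) → f t = 0

open Complex Real


open Complex Real

-- basic bounds for the Möbius quotient
lemma quot_lb {z : ℂ} (hz : 0 < z.re) :
    ‖(z - 1) / (z + 1)‖ ≤ 1 ∧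
    2 * z.re / (‖z + 1‖)^2 ≤ 1 - ‖(z - 1) / (z + 1)‖ ∧
    1 - ‖(z - 1) / (z + 1)‖ ≤ 4 * z.re / (‖z + 1‖)^2 := by
  have hz1 : z + 1 ≠ 0 := by
    intro h
    have := congrArg Complex.re h
    simp at this
    linarith
  set A := ‖z + 1‖ with hA
  set B := ‖z - 1‖ with hB
  have hApos : 0 < A := norm_pos_iff.mpr hz1
  have hBnn : 0 ≤ B := norm_nonneg _
  have hdiff : A^2 - B^2 = 4 * z.re := by
    rw [hA, hB, Complex.sq_norm, Complex.sq_norm]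
    simp [Complex.normSq_apply, Complex.add_re, Complex.add_im, Complex.sub_re, Complex.sub_im]
    ring
  have hBA : B ≤ A := by nlinarith [hz]
  have habs : ‖(z - 1) / (z + 1)‖ = B / A := by
    rw [norm_div]
  rw [habs]
  refine ⟨by rw [div_le_one hApos]; exact hBA, ?_, ?_⟩
  · rw [div_le_iff₀ (by positivity : (0:ℝ) < A^2)]
    have : (1 - B / A) * A ^ 2 = (A - B) * A := by field_simp
    rw [this]
    nlinarith [sq_nonneg (A - B)]
  · rw [le_div_iff₀ (by positivity : (0:ℝ) < A^2)]
    have : (1 - B / A) * A ^ 2 = (A - B) * A := by field_simp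
    rw [this]
    nlinarith [mul_nonneg (sub_nonneg.2 hBA) hBnn]

open Complex Real

lemma re_cpow {z : ℂ} (hz : z ≠ 0) (γ : ℝ) :
    (z ^ (γ:ℂ)).re = (‖z‖) ^ γ * Real.cos (γ * Complex.arg z) := by
  rw [Complex.cpow_def_of_ne_zero hz, Complex.exp_re]
  have h1 : (Complex.log z * (γ:ℂ)).re = Real.log (‖z‖) * γ := by
    simp [Complex.log_re]
  have h2 : (Complex.log z * (γ:ℂ)).im = Complex.arg z * γ := by
    simp [Complex.log_im]
  rw [h1, h2, Real.rpow_def_of_pos (norm_pos_iff.mpr hz), mul_comm (Complex.arg z) γ]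

lemma cos_ge {γ θ : ℝ} (hγ0 : 0 < γ) (hγ1 : γ ≤ 1) (hθ : |θ| ≤ π / 2) :
    Real.cos (γ * (π / 2)) ≤ Real.cos (γ * θ) := by
  have := Real.pi_pos
  rw [← Real.cos_abs (γ * θ), abs_mul, abs_of_pos hγ0]
  exact Real.cos_le_cos_of_nonneg_of_le_pi (by positivity)
    (by nlinarith) (by nlinarith [abs_nonneg θ])

lemma self_add_inv_mono {a b : ℝ} (ha : 1 ≤ a) (hab : a ≤ b) :
    a + a⁻¹ ≤ b + b⁻¹ := by
  have ha0 : 0 < a := by linarith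
  have hb0 : 0 < b := by linarith
  have h1 : a * a⁻¹ = 1 := mul_inv_cancel₀ ha0.ne'
  have h2 : b * b⁻¹ = 1 := mul_inv_cancel₀ hb0.ne'
  have h3 : a⁻¹ - b⁻¹ = (b - a) * (a * b)⁻¹ := by field_simp
  have h4 : (a * b)⁻¹ ≤ 1 := by
    rw [inv_le_one_iff₀]; right; nlinarith
  have h5 : (b - a) * (a * b)⁻¹ ≤ (b - a) * 1 :=
    mul_le_mul_of_nonneg_left h4 (by linarith)
  linarith

lemma rpow_add_inv_le {r γ : ℝ} (hr : 0 < r) (hγ0 : 0 ≤ γ) (hγ1 : γ ≤ 1) :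
    r ^ γ + (r ^ γ)⁻¹ ≤ r + r⁻¹ := by
  rcases le_total 1 r with h | h
  · have h1 : 1 ≤ r ^ γ := Real.one_le_rpow h hγ0
    have h2 : r ^ γ ≤ r := by
      calc r ^ γ ≤ r ^ (1:ℝ) := Real.rpow_le_rpow_of_exponent_le h hγ1
        _ = r := Real.rpow_one r
    exact self_add_inv_mono h1 h2
  · have hinv : 1 ≤ r⁻¹ := (one_le_inv₀ hr).2 h
    have key : (r⁻¹) ^ γ + ((r⁻¹) ^ γ)⁻¹ ≤ r⁻¹ + (r⁻¹)⁻¹ := by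
      have h1 : 1 ≤ (r⁻¹) ^ γ := Real.one_le_rpow hinv hγ0
      have h2 : (r⁻¹) ^ γ ≤ r⁻¹ := by
        calc (r⁻¹) ^ γ ≤ (r⁻¹) ^ (1:ℝ) := Real.rpow_le_rpow_of_exponent_le hinv hγ1
          _ = r⁻¹ := Real.rpow_one _
      exact self_add_inv_mono h1 h2
    rw [Real.inv_rpow hr.le, inv_inv, inv_inv] at key
    linarith

lemma key_ineq {γ : ℝ} (hγ0 : 0 < γ) (hγ1 : γ < 1) {z : ℂ} (hz : 0 < z.re) :
    Real.cos (γ * (π / 2)) / 2 * (1 - ‖(z - 1) / (z + 1)‖)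
      ≤ 1 - ‖(z ^ (γ:ℂ) - 1) / (z ^ (γ:ℂ) + 1)‖ := by
  have hπ := Real.pi_pos
  have hz0 : z ≠ 0 := by
    intro h; rw [h] at hz; simp at hz
  set r := ‖z‖ with hrdef
  have hr : 0 < r := norm_pos_iff.mpr hz0
  have har : z.re ≤ r := Complex.re_le_norm z
  set μ := z ^ (γ:ℂ) with hμdef
  set s := r ^ γ with hsdef
  have hs : 0 < s := Real.rpow_pos_of_pos hr γ
  have habsμ : ‖μ‖ = s := Complex.norm_cpow_real z γ
  set c := Real.cos (γ * (π / 2)) with hcdef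
  have hc : 0 < c := by
    apply Real.cos_pos_of_mem_Ioo
    constructor <;> nlinarith
  have hargz : |Complex.arg z| ≤ π / 2 :=
    le_of_lt (Complex.abs_arg_lt_pi_div_two_iff.2 (Or.inl hz))
  have hμre : c * s ≤ μ.re := by
    rw [hμdef, re_cpow hz0 γ, ← hrdef, ← hsdef, mul_comm c s]
    exact mul_le_mul_of_nonneg_left (cos_ge hγ0 hγ1.le hargz) hs.le
  have hb : 0 < μ.re := lt_of_lt_of_le (by positivity) hμre
  obtain ⟨_, hlb, _⟩ := quot_lb hb
  obtain ⟨_, _, hub⟩ := quot_lb hz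
  set A := ‖z + 1‖ with hAdef
  set M := ‖μ + 1‖ with hMdef
  have hA : 0 < A := by
    apply norm_pos_iff.mpr; intro h
    have := congrArg Complex.re h; simp at this; linarith
  have hM : 0 < M := by
    apply norm_pos_iff.mpr; intro h
    have := congrArg Complex.re h; simp at this; linarith
  have hA2 : A ^ 2 = r ^ 2 + 2 * z.re + 1 := by
    rw [hAdef, hrdef, Complex.sq_norm, Complex.sq_norm]
    simp [Complex.normSq_apply]
    ring
  have hM2 : M ≤ s + 1 := by
    rw [hMdef, ← habsμ]
    simpa using norm_add_le μ 1
  calc c / 2 * (1 - ‖(z - 1) / (z + 1)‖)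
      ≤ c / 2 * (4 * z.re / A ^ 2) := by
        exact mul_le_mul_of_nonneg_left hub (by positivity)
    _ = 2 * c * (z.re / A ^ 2) := by ring
    _ ≤ 2 * c * (r / (r + 1) ^ 2) := by
        apply mul_le_mul_of_nonneg_left _ (by positivity)
        rw [div_le_div_iff₀ (by positivity) (by positivity)]
        nlinarith [mul_nonneg (sub_nonneg.2 har) (by positivity : (0:ℝ) ≤ r ^ 2 + 1)]
    _ ≤ 2 * c * (s / (s + 1) ^ 2) := by
        apply mul_le_mul_of_nonneg_left _ (by positivity)
        have e1 : r / (r + 1) ^ 2 = (r + r⁻¹ + 2)⁻¹ := by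
          rw [inv_eq_one_div, div_eq_div_iff (by positivity) (by positivity)]
          field_simp; ring
        have e2 : s / (s + 1) ^ 2 = (s + s⁻¹ + 2)⁻¹ := by
          rw [inv_eq_one_div, div_eq_div_iff (by positivity) (by positivity)]
          field_simp; ring
        rw [e1, e2]
        have := rpow_add_inv_le hr hγ0.le hγ1.le
        apply inv_anti₀ (by positivity)
        rw [hsdef]; linarith
    _ = 2 * ((c * s) / (s + 1) ^ 2) := by ring
    _ ≤ 2 * (μ.re / M ^ 2) := by
        apply mul_le_mul_of_nonneg_left _ (by norm_num)
        exact div_le_div₀ hb.le hμre (by positivity) (by nlinarith)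
    _ = 2 * μ.re / M ^ 2 := by ring
    _ ≤ 1 - ‖(μ - 1) / (μ + 1)‖ := hlb


theorem stmt18 (γ : ℝ) (hγ : γ ∈ Set.Ioo (0:ℝ) 1) (lam : ℕ → ℂ)
    (hre : ∀ k, 0 < (lam k).re)
    (hsum : ¬ Summable (fun k => 1 - ‖(lam k - 1) / (lam k + 1)‖)) :
    ¬ Summable (fun k =>
      1 - ‖(lam k ^ ((γ : ℝ) : ℂ) - 1) / (lam k ^ ((γ : ℝ) : ℂ) + 1)‖) := by
  intro hS
  apply hsum
  set c := Real.cos (γ * (π / 2)) with hcdef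
  have hπ := Real.pi_pos
  have hc : 0 < c := by
    apply Real.cos_pos_of_mem_Ioo
    constructor <;> nlinarith [hγ.1, hγ.2]
  apply Summable.of_nonneg_of_le
    (fun k => sub_nonneg.2 (quot_lb (hre k)).1)
    (fun k => ?_) (hS.mul_left (2 / c))
  have hk := key_ineq hγ.1 hγ.2 (hre k)
  calc 1 - ‖(lam k - 1) / (lam k + 1)‖
      = 2 / c * (c / 2 * (1 - ‖(lam k - 1) / (lam k + 1)‖)) := by
        field_simp
    _ ≤ 2 / c * (1 - ‖(lam k ^ ((γ:ℝ):ℂ) - 1) / (lam k ^ ((γ:ℝ):ℂ) + 1)‖) :=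
        mul_le_mul_of_nonneg_left hk (by positivity)


end
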